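/- Let J be an abelian topological semigroup, X a Hausdorff locally convex topological vector space over ℂ, and n ∈ ℕ. If P^n(J) is finite dimensional, then P^n(J,X) = P^n(J) ⊗ X; that is, every p ∈ P^n(J,X) can be written as a finite sum p = Σ_{i=1}^{k} q_i(·) • x_i with q_i ∈ P^n(J) and x_i ∈ X. -/

import Mathlib

open scoped BigOperators

/-- Forward difference operator: `delta h f t = f (t + h) - f t`. -/
def delta {J X : Type*} [Add J] [Sub X] (h : J) (f : J → X) : J → X :=
  fun t => f (t + h) - f t

/-- `f : J → X` is a (continuous) polynomial of degree at most `n`,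
i.e. `f ∈ P^n(J, X)`. -/
def IsPolyDeg {J X : Type*} [Add J] [Sub X] [Zero X] [TopologicalSpace J] [TopologicalSpace X]
    (n : ℕ) (f : J → X) : Prop :=
  Continuous f ∧ ∀ h : J, (delta h)^[n + 1] f = 0

theorem delta_add {J X : Type*} [Add J] [AddCommGroup X] (h : J) (f g : J → X) :
    delta h (f + g) = delta h f + delta h g := by
  funext t
  simp only [delta, Pi.add_apply]
  abel

theorem delta_smul {J X : Type*} [Add J] [AddCommGroup X] [Module ℂ X]
    (h : J) (c : ℂ) (f : J → X) :
    delta h (c • f) = c • delta h f := by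
  funext t
  simp only [delta, Pi.smul_apply, smul_sub]

theorem delta_zero {J X : Type*} [Add J] [AddCommGroup X] (h : J) :
    delta h (0 : J → X) = 0 := by
  funext t
  simp [delta]

theorem delta_iter_add {J X : Type*} [Add J] [AddCommGroup X] (h : J) (k : ℕ) (f g : J → X) :
    (delta h)^[k] (f + g) = (delta h)^[k] f + (delta h)^[k] g := by
  induction k generalizing f g with
  | zero => rfl
  | succ k ih =>
    rw [Function.iterate_succ_apply, Function.iterate_succ_apply, Function.iterate_succ_apply,
      delta_add, ih]

theorem delta_iter_smul {J X : Type*} [Add J] [AddCommGroup X] [Module ℂ X]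
    (h : J) (k : ℕ) (c : ℂ) (f : J → X) :
    (delta h)^[k] (c • f) = c • (delta h)^[k] f := by
  induction k generalizing f with
  | zero => rfl
  | succ k ih =>
    rw [Function.iterate_succ_apply, Function.iterate_succ_apply, delta_smul, ih]

theorem delta_iter_zero {J X : Type*} [Add J] [AddCommGroup X] (h : J) (k : ℕ) :
    (delta h)^[k] (0 : J → X) = 0 :=
  Function.iterate_fixed (delta_zero h) k

/-- The space `P^n(J, X)` of polynomials of degree at most `n`, as a `ℂ`-submodule of the
space of all functions `J → X`. -/
def polySpace (J X : Type*) [Add J] [TopologicalSpace J] [AddCommGroup X] [Module ℂ X]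
    [TopologicalSpace X] [IsTopologicalAddGroup X] [ContinuousSMul ℂ X] (n : ℕ) :
    Submodule ℂ (J → X) where
  carrier := {p | IsPolyDeg n p}
  zero_mem' := ⟨continuous_zero, fun h => delta_iter_zero h (n + 1)⟩
  add_mem' := by
    rintro f g ⟨hfc, hfd⟩ ⟨hgc, hgd⟩
    exact ⟨hfc.add hgc, fun h => by rw [delta_iter_add, hfd h, hgd h, add_zero]⟩
  smul_mem' := by
    rintro c f ⟨hfc, hfd⟩
    exact ⟨hfc.const_smul c, fun h => by rw [delta_iter_smul, hfd h, smul_zero]⟩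


/-- `delta` iterates commute with post-composition by an additive map. -/
theorem delta_iter_addHom_comp {J X Y : Type*} [Add J] [AddCommGroup X] [AddCommGroup Y]
    (L : X → Y) (hL : ∀ a b : X, L (a - b) = L a - L b) (h : J) (k : ℕ) (f : J → X) :
    (delta h)^[k] (fun t => L (f t)) = fun t => L ((delta h)^[k] f t) := by
  induction k generalizing f with
  | zero => rfl
  | succ k ih =>
    rw [Function.iterate_succ_apply, Function.iterate_succ_apply]
    have h1 : delta h (fun t => L (f t)) = fun t => L (delta h f t) := by
      funext t; simp [delta, hL]
    rw [h1, ih]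

theorem comp_mem_polySpace {J X : Type*} [AddCommSemigroup J] [TopologicalSpace J]
    [AddCommGroup X] [Module ℂ X] [TopologicalSpace X] [IsTopologicalAddGroup X]
    [ContinuousSMul ℂ X]
    (n : ℕ) (p : J → X) (hp : IsPolyDeg n p) (L : X →L[ℂ] ℂ) :
    (fun t => L (p t)) ∈ polySpace J ℂ n := by
  refine ⟨L.continuous.comp hp.1, fun h => ?_⟩
  rw [delta_iter_addHom_comp (fun x => L x) (fun a b => map_sub L a b) h (n+1) p]
  funext t
  have := congrFun (hp.2 h) t
  simp only [Pi.zero_apply] at this ⊢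
  simp [this]

theorem continuousSMul_real_of_complex {X : Type*} [AddCommGroup X] [Module ℂ X]
    [TopologicalSpace X] [ContinuousSMul ℂ X] [Module ℝ X] [IsScalarTower ℝ ℂ X] :
    ContinuousSMul ℝ X := by
  constructor
  have h1 : (fun p : ℝ × X => p.1 • p.2) = fun p : ℝ × X => ((p.1 : ℂ) • p.2) := by
    funext p
    rw [← algebraMap_smul ℂ p.1 p.2]
    rfl
  rw [h1]
  exact (Complex.continuous_ofReal.comp continuous_fst).smul continuous_snd

/-- Hahn-Banach separation for complex locally convex spaces, via complexification of a
real continuous functional. -/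
theorem exists_complex_clm_ne_zero {X : Type*}
    [AddCommGroup X] [Module ℂ X] [TopologicalSpace X] [IsTopologicalAddGroup X]
    [ContinuousSMul ℂ X] [T2Space X]
    [Module ℝ X] [IsScalarTower ℝ ℂ X] [LocallyConvexSpace ℝ X]
    {x : X} (hx : x ≠ 0) : ∃ L : X →L[ℂ] ℂ, L x ≠ 0 := by
  haveI : ContinuousSMul ℝ X := continuousSMul_real_of_complex
  obtain ⟨ℓ, hℓ⟩ := SeparatingDual.exists_ne_zero (R := ℝ) hx
  have hcont : Continuous fun y : X => (ℓ.toLinearMap.extendTo𝕜' y : ℂ) := by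
    have heq : (fun y : X => (ℓ.toLinearMap.extendTo𝕜' y : ℂ)) =
        fun y : X => ((ℓ y : ℂ) - (RCLike.I : ℂ) * (ℓ ((RCLike.I : ℂ) • y) : ℂ)) := by
      funext y; exact ℓ.toLinearMap.extendTo𝕜'_apply y
    rw [heq]
    exact (Complex.continuous_ofReal.comp ℓ.continuous).sub
      (continuous_const.mul (Complex.continuous_ofReal.comp
        (ℓ.continuous.comp (continuous_const_smul _))))
  refine ⟨⟨ℓ.toLinearMap.extendTo𝕜', hcont⟩, fun h => ?_⟩
  have hre := ℓ.toLinearMap.extendTo𝕜'_apply_re (𝕜 := ℂ) x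
  rw [show (Module.Dual.extendRCLike ℓ.toLinearMap x : ℂ) = 0 from h] at hre
  simp only [map_zero] at hre
  exact hℓ hre.symm

theorem pi_eq_sum_single {k : ℕ} (g : Fin k → ℂ) :
    g = ∑ i, g i • (Pi.single i 1 : Fin k → ℂ) := by
  funext j
  rw [Finset.sum_apply]
  simp [Pi.single_apply, mul_comm]

/-- if `J` is an abelian topological semigroup, `X` a Hausdorff locally
convex topological vector space over `ℂ`, and `P^n(J)` is finite dimensional, then
`P^n(J, X) = P^n(J) ⊗ X`: every `p ∈ P^n(J, X)` is a finite sum `∑ qᵢ(·) • xᵢ` with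
`qᵢ ∈ P^n(J)` and `xᵢ ∈ X`. -/
theorem vector_valued_polynomials_tensor_decomposition
    {J X : Type*} [AddCommSemigroup J] [TopologicalSpace J] [ContinuousAdd J]
    [AddCommGroup X] [Module ℂ X] [TopologicalSpace X] [IsTopologicalAddGroup X]
    [ContinuousSMul ℂ X] [T2Space X]
    [Module ℝ X] [IsScalarTower ℝ ℂ X] [LocallyConvexSpace ℝ X]
    (n : ℕ) (hfd : FiniteDimensional ℂ (polySpace J ℂ n))
    (p : J → X) (hp : IsPolyDeg n p) :
    ∃ (k : ℕ) (q : Fin k → J → ℂ) (x : Fin k → X),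
      (∀ i, IsPolyDeg n (q i)) ∧ ∀ t : J, p t = ∑ i, q i t • x i := by
  classical
  haveI : FiniteDimensional ℂ (polySpace J ℂ n) := hfd
  set V := polySpace J ℂ n with hV
  -- evaluation functionals on V
  let ev : J → Module.Dual ℂ V := fun t => (LinearMap.proj t).comp V.subtype
  have hspan : Submodule.span ℂ (Set.range ev) = ⊤ := by
    apply Submodule.span_eq_top_of_ne_zero
    intro z hz
    have hz' : (z : J → ℂ) ≠ 0 := fun hc => hz (Subtype.ext hc)
    obtain ⟨t, ht⟩ := Function.ne_iff.1 hz'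
    exact ⟨ev t, Set.mem_range_self t, ht⟩
  obtain ⟨b, hbsub, hbspan, hbind⟩ := exists_linearIndependent ℂ (Set.range ev)
  rw [hspan] at hbspan
  have hbfin : b.Finite := hbind.setFinite
  haveI := hbfin.fintype
  set k := Fintype.card b with hk
  let e : Fin k → b := (Fintype.equivFin b).symm
  have ht : ∀ i : Fin k, ∃ s : J, ev s = (e i : Module.Dual ℂ V) := fun i => hbsub (e i).2
  choose t htt using ht
  -- the evaluation map Φ : V → ℂ^k is injective
  let Φ : V →ₗ[ℂ] (Fin k → ℂ) := LinearMap.pi (fun i => ev (t i))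
  have hΦker : LinearMap.ker Φ = ⊥ := by
    rw [LinearMap.ker_eq_bot']
    intro q hq
    have hall : ∀ f : Module.Dual ℂ V, f q = 0 := by
      intro f
      have hf : f ∈ Submodule.span ℂ b := hbspan ▸ Submodule.mem_top
      induction hf using Submodule.span_induction with
      | mem f hf =>
        have hi : ev (t ((Fintype.equivFin b) ⟨f, hf⟩)) = f := by
          rw [htt]
          simp [e]
        rw [← hi]
        exact congrFun hq _
      | zero => simp
      | add f g _ _ hf hg => simp [hf, hg]
      | smul c f _ hf => simp [hf]
    exact (Module.forall_dual_apply_eq_zero_iff ℂ q).1 hall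
  obtain ⟨Ψ, hΨ⟩ := Φ.exists_leftInverse_of_injective hΦker
  let qf : Fin k → V := fun i => Ψ (Pi.single i 1)
  refine ⟨k, fun i => (qf i : J → ℂ), fun i => p (t i), fun i => (qf i).2, fun s => ?_⟩
  rw [← sub_eq_zero]
  by_contra hy
  obtain ⟨L, hL⟩ := exists_complex_clm_ne_zero hy
  apply hL
  -- the scalar polynomial L ∘ p
  let pe : V := ⟨fun u => L (p u), comp_mem_polySpace n p hp L⟩
  have hkey : Ψ (Φ pe) = pe := LinearMap.congr_fun hΨ pe
  have hΦpe : Φ pe = ∑ i, L (p (t i)) • (Pi.single i 1 : Fin k → ℂ) := by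
    have h1 : Φ pe = fun i => L (p (t i)) := rfl
    rw [h1]
    exact pi_eq_sum_single _
  have hpe : pe = ∑ i, L (p (t i)) • qf i := by
    rw [← hkey, hΦpe, map_sum]
    exact Finset.sum_congr rfl fun i _ => map_smul Ψ _ _
  have hval := congrArg (fun v : V => (v : J → ℂ) s) hpe
  simp only [AddSubmonoidClass.coe_finset_sum, SetLike.val_smul, Finset.sum_apply,
    Pi.smul_apply, smul_eq_mul] at hval
  have hval' : L (p s) = ∑ i, L (p (t i)) * (qf i : J → ℂ) s := hval
  rw [map_sub, hval', sub_eq_zero]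
  rw [map_sum]
  exact Finset.sum_congr rfl fun i _ => by rw [map_smul, smul_eq_mul, mul_comm]
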